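/- arXiv:2101.10895 — 2 statements merged into one kernel-verified Lean document; each statement's English description precedes it below -/
import Mathlib

section
/- Let f be a proper convex function on a real inner product space, let C be a convex open set, let ξ be a differentiable strictly convex function with Bregman divergence Ψ_ξ(x‖y) = ξ(x) − ξ(y) − ⟨∇ξ(y), x − y⟩. For η > 0 and x₀, let x* = argmin_{x ∈ C} { f(x) + η⁻¹ Ψ_ξ(x‖x₀) }. Then for all x ∈ C: f(x) − f(x*) ≥ η⁻¹ ( Ψ_ξ(x*‖x₀) + Ψ_ξ(x‖x*) − Ψ_ξ(x‖x₀) ). -/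
open scoped RealInnerProductSpace

/-- Mirror-descent / Bregman three-point lemma (minimization form). -/
theorem stmt_0 {E : Type*} [NormedAddCommGroup E] [InnerProductSpace ℝ E] [CompleteSpace E]
    (f ξ : E → ℝ) (C : Set E) (hCopen : IsOpen C) (hCconv : Convex ℝ C)
    (hf : ConvexOn ℝ C f) (hξdiff : Differentiable ℝ ξ)
    (hξstrict : StrictConvexOn ℝ Set.univ ξ)
    (Ψ : E → E → ℝ)
    (hΨ : ∀ x y, Ψ x y = ξ x - ξ y - ⟪gradient ξ y, x - y⟫)
    (η : ℝ) (hη : 0 < η) (x₀ xstar : E) (hxstar : xstar ∈ C)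
    (hmin : IsMinOn (fun x => f x + η⁻¹ * Ψ x x₀) C xstar) :
    ∀ x ∈ C, f x - f xstar ≥ η⁻¹ * (Ψ xstar x₀ + Ψ x xstar - Ψ x x₀) := by
  intro x hx
  set g₀ := gradient ξ x₀ with hg₀
  set gs := gradient ξ xstar with hgs
  set v := x - xstar with hv
  have hηinv : (0:ℝ) < η⁻¹ := inv_pos.mpr hη
  -- key inequality for t ∈ (0,1]
  have key : ∀ t ∈ Set.Ioc (0:ℝ) 1,
      η⁻¹ * ⟪g₀, v⟫ - η⁻¹ * ((ξ (xstar + t • v) - ξ xstar) / t) ≤ f x - f xstar := by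
    intro t ht
    obtain ⟨ht0, ht1⟩ := ht
    have hmem : xstar + t • v ∈ C := by
      have h := hCconv hxstar hx (by linarith : (0:ℝ) ≤ 1 - t) ht0.le (by ring)
      have : xstar + t • v = (1 - t) • xstar + t • x := by
        rw [hv]; module
      rw [this]; exact h
    have hF := isMinOn_iff.mp hmin _ hmem
    have hconv := hf.2 hxstar hx (by linarith : (0:ℝ) ≤ 1 - t) ht0.le (by ring)
    have hxt : (1 - t) • xstar + t • x = xstar + t • v := by rw [hv]; module
    rw [hxt] at hconv
    have hinner : ⟪g₀, xstar + t • v - x₀⟫ = ⟪g₀, xstar - x₀⟫ + t * ⟪g₀, v⟫ := by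
      have : xstar + t • v - x₀ = (xstar - x₀) + t • v := by abel
      rw [this, inner_add_right, real_inner_smul_right]
    have hΨt : Ψ (xstar + t • v) x₀ - Ψ xstar x₀
        = ξ (xstar + t • v) - ξ xstar - t * ⟪g₀, v⟫ := by
      rw [hΨ, hΨ, hinner]; ring
    set A := ξ (xstar + t • v) with hA
    set D := (A - ξ xstar) / t with hD
    have hAD : A - ξ xstar = t * D := by
      rw [hD]; field_simp
    have hmul : η⁻¹ * Ψ (xstar + t • v) x₀ - η⁻¹ * Ψ xstar x₀
        = η⁻¹ * (t * D - t * ⟪g₀, v⟫) := by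
      rw [← mul_sub, hΨt, hAD]
    have hF' : f xstar - f (xstar + t • v) ≤ η⁻¹ * (t * D - t * ⟪g₀, v⟫) := by
      linarith [hF]
    have hconv' : f (xstar + t • v) ≤ (1 - t) * f xstar + t * f x := by
      simpa [smul_eq_mul] using hconv
    have H : t * (η⁻¹ * ⟪g₀, v⟫ - η⁻¹ * D) ≤ t * (f x - f xstar) := by
      nlinarith [hF', hconv']
    nlinarith [H, ht0]
  -- derivative of t ↦ ξ (xstar + t • v) at 0
  have h1 : HasDerivAt (fun t : ℝ => xstar + t • v) v 0 := by
    simpa using ((hasDerivAt_id (0:ℝ)).smul_const v).const_add xstar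
  have hgrad : HasGradientAt ξ gs xstar := (hξdiff xstar).hasGradientAt
  have hfd : HasFDerivAt ξ (InnerProductSpace.toDual ℝ E gs) xstar := hgrad.hasFDerivAt
  have hfd' : HasFDerivAt ξ (InnerProductSpace.toDual ℝ E gs) (xstar + (0:ℝ) • v) := by
    simpa using hfd
  have hcomp : HasDerivAt (fun t : ℝ => ξ (xstar + t • v)) ⟪gs, v⟫ 0 := by
    have := hfd'.comp_hasDerivAt 0 h1
    exact this
  have hslope : Filter.Tendsto (fun t : ℝ => (ξ (xstar + t • v) - ξ xstar) / t)
      (nhdsWithin 0 (Set.Ioi 0)) (nhds ⟪gs, v⟫) := by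
    have h2 := hasDerivAt_iff_tendsto_slope.mp hcomp
    have h3 : Filter.Tendsto (slope (fun t : ℝ => ξ (xstar + t • v)) 0)
        (nhdsWithin 0 (Set.Ioi 0)) (nhds ⟪gs, v⟫) :=
      h2.mono_left (nhdsWithin_mono 0 (fun y hy => ne_of_gt hy))
    refine h3.congr (fun t => ?_)
    simp [slope, div_eq_inv_mul]
  have hlim : Filter.Tendsto
      (fun t : ℝ => η⁻¹ * ⟪g₀, v⟫ - η⁻¹ * ((ξ (xstar + t • v) - ξ xstar) / t))
      (nhdsWithin 0 (Set.Ioi 0)) (nhds (η⁻¹ * ⟪g₀, v⟫ - η⁻¹ * ⟪gs, v⟫)) :=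
    ((hslope.const_mul η⁻¹).const_sub _)
  have hev : ∀ᶠ t in nhdsWithin 0 (Set.Ioi 0),
      η⁻¹ * ⟪g₀, v⟫ - η⁻¹ * ((ξ (xstar + t • v) - ξ xstar) / t) ≤ f x - f xstar := by
    filter_upwards [Ioc_mem_nhdsGT_of_mem ⟨le_refl (0:ℝ), zero_lt_one⟩] with t ht
    exact key t ht
  have hfinal : η⁻¹ * ⟪g₀, v⟫ - η⁻¹ * ⟪gs, v⟫ ≤ f x - f xstar :=
    le_of_tendsto hlim hev
  have hRHS : Ψ xstar x₀ + Ψ x xstar - Ψ x x₀ = ⟪g₀, v⟫ - ⟪gs, v⟫ := by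
    rw [hΨ, hΨ, hΨ, hv]
    have e1 : ⟪g₀, x - x₀⟫ = ⟪g₀, xstar - x₀⟫ + ⟪g₀, x - xstar⟫ := by
      rw [← inner_add_right]; congr 1; abel
    rw [e1]; ring
  rw [ge_iff_le, hRHS, mul_sub]
  exact hfinal
end

section
/- Let ν be any nonnegative function on S × A satisfying the flow-balance equations Σ_{(s,a)} ν(s,a)(1{s=s′} − γ P(s′|s,a)) = (1−γ) μ₀(s′) for all s′, with μ₀ a probability distribution having full support. Define the stationary policy π̃(a|s) = ν(s,a)/Σ_{a'} ν(s,a') (wherever the denominator is positive). Then the occupation measure of π̃ equals ν, i.e., ν^{π̃}(s,a) = ν(s,a) for all (s,a) with Σ_{a'} ν(s,a') > 0. -/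
/-- Joint state-action distribution at time `t` of the Markov chain induced by
a stationary policy `pol` with transition kernel `P` and initial state
distribution `μ`. -/
noncomputable def occ {S A : Type*} [Fintype S] [Fintype A]
    (P : S → A → S → ℝ) (pol : S → A → ℝ) (μ : S → ℝ) : ℕ → S → A → ℝ
  | 0 => fun s a => μ s * pol s a
  | t + 1 => fun s' a' => (∑ s, ∑ a, occ P pol μ t s a * P s a s') * pol s' a'

/-- Discounted occupation measure `ν^π(s,a) = (1−γ) Σ_t γ^t P^π(s_t=s, a_t=a)`. -/
noncomputable def occMeas {S A : Type*} [Fintype S] [Fintype A] (γ : ℝ)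
    (P : S → A → S → ℝ) (pol : S → A → ℝ) (μ : S → ℝ) (s : S) (a : A) : ℝ :=
  (1 - γ) * ∑' t : ℕ, γ ^ t * occ P pol μ t s a

/-- Any nonnegative solution `ν` of the flow-balance equations is the
occupation measure of the stationary policy `π̃(a|s) = ν(s,a)/Σ_{a'} ν(s,a')`
(at all states where the denominator is positive). -/
theorem stmt_12 {S A : Type*} [Fintype S] [Fintype A] [DecidableEq S]
    [Nonempty S] [Nonempty A]
    (γ : ℝ) (hγ : γ ∈ Set.Ioo (0 : ℝ) 1)
    (P : S → A → S → ℝ) (hP0 : ∀ s a s', 0 ≤ P s a s')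
    (hP1 : ∀ s a, ∑ s', P s a s' = 1)
    (μ₀ : S → ℝ) (hμ₀0 : ∀ s, 0 < μ₀ s) (hμ₀1 : ∑ s, μ₀ s = 1)
    (ν : S → A → ℝ) (hν0 : ∀ s a, 0 ≤ ν s a)
    (hflow : ∀ s' : S, ∑ s, ∑ a, ν s a *
        ((if s = s' then (1 : ℝ) else 0) - γ * P s a s') = (1 - γ) * μ₀ s')
    (tπ : S → A → ℝ) (htπ : ∀ s a, tπ s a = ν s a / ∑ a', ν s a') :
    ∀ s a, 0 < ∑ a', ν s a' → occMeas γ P tπ μ₀ s a = ν s a := by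
  obtain ⟨hγ0, hγ1⟩ := hγ
  have hγle : (0:ℝ) ≤ γ := le_of_lt hγ0
  have h1γ : (0:ℝ) < 1 - γ := by linarith
  set ρ : S → ℝ := fun s => ∑ a', ν s a' with hρdef
  have hρ0 : ∀ s, 0 ≤ ρ s := fun s => Finset.sum_nonneg fun a _ => hν0 s a
  -- rewritten flow equation
  have hflow' : ∀ s', ρ s' = (1 - γ) * μ₀ s' + γ * ∑ s, ∑ a, ν s a * P s a s' := by
    intro s'
    have h := hflow s'
    have h1 : ∑ s, ∑ a, ν s a * ((if s = s' then (1:ℝ) else 0) - γ * P s a s')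
        = (∑ s, ∑ a, ν s a * (if s = s' then (1:ℝ) else 0))
          - γ * (∑ s, ∑ a, ν s a * P s a s') := by
      rw [Finset.mul_sum, ← Finset.sum_sub_distrib]
      refine Finset.sum_congr rfl fun s _ => ?_
      rw [Finset.mul_sum, ← Finset.sum_sub_distrib]
      exact Finset.sum_congr rfl fun a _ => by ring
    have h2 : (∑ s, ∑ a, ν s a * (if s = s' then (1:ℝ) else 0)) = ρ s' := by
      have : ∀ s, (∑ a, ν s a * (if s = s' then (1:ℝ) else 0))
          = if s = s' then ρ s else 0 := by
        intro s
        by_cases hs : s = s' <;> simp [hs, hρdef]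
      rw [Finset.sum_congr rfl fun s _ => this s, Finset.sum_ite_eq' Finset.univ s']
      simp
    rw [h1, h2] at h
    linarith
  have hρpos : ∀ s, 0 < ρ s := by
    intro s
    rw [hflow' s]
    have hP : 0 ≤ ∑ s0, ∑ a, ν s0 a * P s0 a s :=
      Finset.sum_nonneg fun s0 _ => Finset.sum_nonneg fun a _ =>
        mul_nonneg (hν0 s0 a) (hP0 s0 a s)
    nlinarith [hμ₀0 s]
  have hπ0 : ∀ s a, 0 ≤ tπ s a := fun s a => by
    rw [htπ s a]; exact div_nonneg (hν0 s a) (hρ0 s)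
  have hπ1 : ∀ s, ∑ a, tπ s a = 1 := by
    intro s
    have : ∑ a, tπ s a = (∑ a, ν s a) / ρ s := by
      rw [Finset.sum_div]
      exact Finset.sum_congr rfl fun a _ => htπ s a
    rw [this]
    exact div_self (hρpos s).ne'
  have hνeq : ∀ s a, ν s a = ρ s * tπ s a := by
    intro s a
    rw [htπ s a, mul_comm, div_mul_cancel₀ _ (hρpos s).ne']
  -- properties of occ
  have hocc0 : ∀ t s a, 0 ≤ occ P tπ μ₀ t s a := by
    intro t
    induction t with
    | zero => exact fun s a => mul_nonneg (hμ₀0 s).le (hπ0 s a)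
    | succ t ih =>
      intro s' a'
      show 0 ≤ (∑ s, ∑ a, occ P tπ μ₀ t s a * P s a s') * tπ s' a'
      exact mul_nonneg (Finset.sum_nonneg fun s _ => Finset.sum_nonneg fun a _ =>
        mul_nonneg (ih s a) (hP0 s a s')) (hπ0 s' a')
  have hmass : ∀ t, ∑ s, ∑ a, occ P tπ μ₀ t s a = 1 := by
    intro t
    induction t with
    | zero =>
      show ∑ s, ∑ a, μ₀ s * tπ s a = 1
      simp only [← Finset.mul_sum, hπ1, mul_one]
      exact hμ₀1
    | succ t ih =>
      show ∑ s', ∑ a', (∑ s, ∑ a, occ P tπ μ₀ t s a * P s a s') * tπ s' a' = 1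
      have : ∀ s', ∑ a', (∑ s, ∑ a, occ P tπ μ₀ t s a * P s a s') * tπ s' a'
          = ∑ s, ∑ a, occ P tπ μ₀ t s a * P s a s' := by
        intro s'
        rw [← Finset.mul_sum, hπ1, mul_one]
      rw [Finset.sum_congr rfl fun s' _ => this s', Finset.sum_comm]
      have : ∀ s, ∑ s', ∑ a, occ P tπ μ₀ t s a * P s a s'
          = ∑ a, occ P tπ μ₀ t s a := by
        intro s
        rw [Finset.sum_comm]
        exact Finset.sum_congr rfl fun a _ => by
          rw [← Finset.mul_sum, hP1, mul_one]
      rw [Finset.sum_congr rfl fun s _ => this s]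
      exact ih
  have hocc_le : ∀ t s a, occ P tπ μ₀ t s a ≤ 1 := by
    intro t s a
    calc occ P tπ μ₀ t s a ≤ ∑ a', occ P tπ μ₀ t s a' :=
          Finset.single_le_sum (fun a' _ => hocc0 t s a') (Finset.mem_univ a)
      _ ≤ ∑ s', ∑ a', occ P tπ μ₀ t s' a' :=
          Finset.single_le_sum (fun s' _ => Finset.sum_nonneg fun a' _ => hocc0 t s' a')
            (Finset.mem_univ s)
      _ = 1 := hmass t
  have hsum : ∀ s a, Summable (fun t => γ ^ t * occ P tπ μ₀ t s a) := by
    intro s a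
    refine Summable.of_nonneg_of_le
      (fun t => mul_nonneg (pow_nonneg hγle t) (hocc0 t s a)) (fun t => ?_)
      (summable_geometric_of_lt_one hγle hγ1)
    calc γ ^ t * occ P tπ μ₀ t s a ≤ γ ^ t * 1 :=
          mul_le_mul_of_nonneg_left (hocc_le t s a) (pow_nonneg hγle t)
      _ = γ ^ t := mul_one _
  set F : S → A → ℝ := fun s a => ∑' t, γ ^ t * occ P tπ μ₀ t s a with hFdef
  -- the fixed point equation for F
  have key : ∀ s' a', F s' a'
      = (μ₀ s' + γ * ∑ s, ∑ a, F s a * P s a s') * tπ s' a' := by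
    intro s' a'
    have hshift : F s' a' = μ₀ s' * tπ s' a'
        + γ * ∑' t, γ ^ t * occ P tπ μ₀ (t + 1) s' a' := by
      rw [hFdef]
      simp only
      rw [Summable.tsum_eq_zero_add (hsum s' a')]
      congr 1
      · simp [occ]
      · rw [← tsum_mul_left]
        exact tsum_congr fun t => by rw [pow_succ']; ring
    have h1 : ∀ t : ℕ, γ ^ t * occ P tπ μ₀ (t + 1) s' a'
        = (∑ s, ∑ a, (γ ^ t * occ P tπ μ₀ t s a) * P s a s') * tπ s' a' := by
      intro t
      show γ ^ t * ((∑ s, ∑ a, occ P tπ μ₀ t s a * P s a s') * tπ s' a') = _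
      simp only [Finset.mul_sum, Finset.sum_mul]
      exact Finset.sum_congr rfl fun s _ => Finset.sum_congr rfl fun a _ => by ring
    have hsw : ∑' t, γ ^ t * occ P tπ μ₀ (t + 1) s' a'
        = (∑ s, ∑ a, F s a * P s a s') * tπ s' a' := by
      rw [tsum_congr h1, tsum_mul_right]
      congr 1
      rw [Summable.tsum_finsetSum (fun s _ => summable_sum fun a _ =>
        Summable.mul_right _ (hsum s a))]
      refine Finset.sum_congr rfl fun s _ => ?_
      rw [Summable.tsum_finsetSum (fun a _ => Summable.mul_right _ (hsum s a))]
      exact Finset.sum_congr rfl fun a _ => tsum_mul_right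
    rw [hshift, hsw]
    ring
  -- the flow equation for ν'/ρ'
  set ν' : S → A → ℝ := fun s a => ν s a / (1 - γ) with hν'def
  set ρ' : S → ℝ := fun s => ρ s / (1 - γ) with hρ'def
  have hρ'eq : ∀ s', ρ' s' = μ₀ s' + γ * ∑ s, ∑ a, ν' s a * P s a s' := by
    intro s'
    have hs : ∑ s, ∑ a, ν' s a * P s a s'
        = (∑ s, ∑ a, ν s a * P s a s') / (1 - γ) := by
      rw [Finset.sum_div]
      refine Finset.sum_congr rfl fun s _ => ?_
      rw [Finset.sum_div]
      refine Finset.sum_congr rfl fun a _ => ?_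
      show ν s a / (1 - γ) * P s a s' = _
      ring
    show ρ s' / (1 - γ) = μ₀ s' + γ * ∑ s, ∑ a, ν' s a * P s a s'
    rw [hs, hflow' s']
    field_simp
  have hν'eq : ∀ s a, ν' s a = ρ' s * tπ s a := by
    intro s a
    rw [hν'def, hρ'def]
    simp only
    rw [hνeq s a]
    ring
  -- the difference Δ
  set Δ : S → ℝ := fun s => (μ₀ s + γ * ∑ s0, ∑ a, F s0 a * P s0 a s) - ρ' s with hΔdef
  have hΔunfold : ∀ s, Δ s = (μ₀ s + γ * ∑ s0, ∑ a, F s0 a * P s0 a s) - ρ' s :=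
    fun s => rfl
  have hFν' : ∀ s a, F s a - ν' s a = Δ s * tπ s a := by
    intro s a
    rw [hΔunfold s, key s a, hν'eq s a]
    ring
  have hΔrec : ∀ s', Δ s' = γ * ∑ s, Δ s * ∑ a, tπ s a * P s a s' := by
    intro s'
    have hdiff : ∑ s, ∑ a, F s a * P s a s' - ∑ s, ∑ a, ν' s a * P s a s'
        = ∑ s, Δ s * ∑ a, tπ s a * P s a s' := by
      rw [← Finset.sum_sub_distrib]
      refine Finset.sum_congr rfl fun s _ => ?_
      rw [← Finset.sum_sub_distrib, Finset.mul_sum]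
      refine Finset.sum_congr rfl fun a _ => ?_
      rw [← sub_mul, hFν' s a]
      ring
    rw [hΔunfold s', hρ'eq s', ← hdiff]
    ring
  -- ℓ¹ contraction argument
  have hq0 : ∀ s s', 0 ≤ ∑ a, tπ s a * P s a s' :=
    fun s s' => Finset.sum_nonneg fun a _ => mul_nonneg (hπ0 s a) (hP0 s a s')
  have hq1 : ∀ s, ∑ s', ∑ a, tπ s a * P s a s' = 1 := by
    intro s
    rw [Finset.sum_comm]
    have : ∀ a, ∑ s', tπ s a * P s a s' = tπ s a := by
      intro a; rw [← Finset.mul_sum, hP1, mul_one]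
    rw [Finset.sum_congr rfl fun a _ => this a]
    exact hπ1 s
  have hT : ∑ s', |Δ s'| ≤ γ * ∑ s, |Δ s| := by
    calc ∑ s', |Δ s'| = ∑ s', |γ * ∑ s, Δ s * ∑ a, tπ s a * P s a s'| :=
          Finset.sum_congr rfl fun s' _ => by rw [hΔrec s']
      _ ≤ ∑ s', γ * ∑ s, |Δ s| * ∑ a, tπ s a * P s a s' := by
          refine Finset.sum_le_sum fun s' _ => ?_
          rw [abs_mul, abs_of_nonneg hγle]
          refine mul_le_mul_of_nonneg_left ?_ hγle
          calc |∑ s, Δ s * ∑ a, tπ s a * P s a s'|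
              ≤ ∑ s, |Δ s * ∑ a, tπ s a * P s a s'| := Finset.abs_sum_le_sum_abs _ _
            _ = ∑ s, |Δ s| * ∑ a, tπ s a * P s a s' :=
                Finset.sum_congr rfl fun s _ => by
                  rw [abs_mul, abs_of_nonneg (hq0 s s')]
      _ = γ * ∑ s, |Δ s| := by
          rw [← Finset.mul_sum, Finset.sum_comm]
          congr 1
          refine Finset.sum_congr rfl fun s _ => ?_
          rw [← Finset.mul_sum, hq1 s, mul_one]
  have hTnn : 0 ≤ ∑ s, |Δ s| := Finset.sum_nonneg fun s _ => abs_nonneg _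
  have hT0 : ∑ s, |Δ s| = 0 := by nlinarith
  have hΔ0 : ∀ s, Δ s = 0 := by
    intro s
    have := (Finset.sum_eq_zero_iff_of_nonneg
      (fun s (_ : s ∈ Finset.univ) => abs_nonneg (Δ s))).mp hT0 s (Finset.mem_univ s)
    exact abs_eq_zero.mp this
  -- conclude
  intro s a _
  have hF : F s a = ν' s a := by
    have := hFν' s a
    rw [hΔ0 s, zero_mul] at this
    linarith
  show (1 - γ) * F s a = ν s a
  rw [hF, hν'def]
  field_simp
end
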